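/- Let ψ: ℝⁿ → ℝ be η-weakly convex with η > 0 and μ ∈ (0, η⁻¹). Then ∇(μψ) is Lipschitz continuous with Lipschitz constant max{μ⁻¹, η/(1 − ημ)}. -/

import Mathlib

open Set

open RealInnerProductSpace in
private lemma sq_comb' {E : Type*} [NormedAddCommGroup E] [InnerProductSpace ℝ E] (a b : E) (t : ℝ) :
    ‖(1-t)•a + t•b‖^2 = (1-t)*‖a‖^2 + t*‖b‖^2 - t*(1-t)*‖a-b‖^2 := by
  simp only [← real_inner_self_eq_norm_sq, inner_add_add_self, inner_sub_sub_self,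
    real_inner_smul_left, real_inner_smul_right]
  ring_nf

private lemma aux_limit' {c d A : ℝ} (hc : 0 < c) (hd : 0 ≤ d)
    (h : ∀ t : ℝ, 0 < t → t ≤ 1 → c*(1-t)*d ≤ A) : c*d ≤ A := by
  rcases eq_or_lt_of_le hd with h0 | h0
  · have := h 1 one_pos le_rfl
    rw [← h0]; rw [← h0] at this; linarith
  · apply le_of_forall_sub_le
    intro ε hε
    have hcd : 0 < c*d := mul_pos hc h0
    have ht0 : 0 < min 1 (ε/(c*d)) := lt_min one_pos (div_pos hε hcd)
    have ht1 : min 1 (ε/(c*d)) ≤ 1 := min_le_left _ _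
    have hkey := h _ ht0 ht1
    have htcd : (min 1 (ε/(c*d))) * (c*d) ≤ ε := by
      calc (min 1 (ε/(c*d))) * (c*d) ≤ (ε / (c*d)) * (c*d) :=
            mul_le_mul_of_nonneg_right (min_le_right _ _) hcd.le
      _ = ε := div_mul_cancel₀ _ hcd.ne'
    nlinarith [hkey, htcd]

open RealInnerProductSpace in
private lemma quad_growth' {n : ℕ} (ψ : EuclideanSpace ℝ (Fin n) → ℝ) (η μ : ℝ)
    (hμ0 : 0 < μ) (hημ : η * μ < 1)
    (hwc : ConvexOn ℝ Set.univ (fun z => ψ z + (η / 2) * ‖z‖ ^ 2))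
    (prox : EuclideanSpace ℝ (Fin n) → EuclideanSpace ℝ (Fin n))
    (hprox : ∀ z, IsMinOn (fun w => ψ w + (1 / (2 * μ)) * ‖w - z‖ ^ 2) Set.univ (prox z))
    (z w : EuclideanSpace ℝ (Fin n)) :
    ψ (prox z) + (1 / (2 * μ)) * ‖prox z - z‖ ^ 2 + (1/(2*μ) - η/2) * ‖w - prox z‖^2
      ≤ ψ w + (1 / (2 * μ)) * ‖w - z‖ ^ 2 := by
  have hc0 : 0 < 1/(2*μ) - η/2 := by
    rw [div_sub_div _ _ (by positivity) (by norm_num : (2:ℝ) ≠ 0)]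
    apply div_pos
    · nlinarith
    · positivity
  have key : ∀ t : ℝ, 0 < t → t ≤ 1 →
      (1/(2*μ) - η/2) * (1-t) * ‖w - prox z‖^2 ≤
        (ψ w + (1 / (2 * μ)) * ‖w - z‖ ^ 2)
        - (ψ (prox z) + (1 / (2 * μ)) * ‖prox z - z‖ ^ 2) := by
    intro t ht0 ht1
    set p := prox z with hp
    have hcvx := hwc.2 (mem_univ p) (mem_univ w) (by linarith : (0:ℝ) ≤ 1 - t)
      (le_of_lt ht0) (by ring : (1-t) + t = 1)
    simp only [smul_eq_mul] at hcvx
    have hmin : ψ p + (1 / (2 * μ)) * ‖p - z‖ ^ 2 ≤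
        ψ ((1-t)•p + t•w) + (1 / (2 * μ)) * ‖(1-t)•p + t•w - z‖ ^ 2 :=
      hprox z (mem_univ _)
    have h1 : ‖(1-t)•p + t•w - z‖^2
        = (1-t)*‖p-z‖^2 + t*‖w-z‖^2 - t*(1-t)*‖w-p‖^2 := by
      have h := sq_comb' (p - z) (w - z) t
      have he : (1-t)•(p-z) + t•(w-z) = (1-t)•p + t•w - z := by module
      rw [he] at h
      rw [h, show p - z - (w - z) = p - w from by abel, norm_sub_rev p w]
    have h2 : ‖(1-t)•p + t•w‖^2 = (1-t)*‖p‖^2 + t*‖w‖^2 - t*(1-t)*‖w-p‖^2 := by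
      rw [sq_comb' p w t, norm_sub_rev p w]
    have h1' : (1/(2*μ)) * ‖(1-t)•p + t•w - z‖^2
        = (1/(2*μ))*((1-t)*‖p-z‖^2) + (1/(2*μ))*(t*‖w-z‖^2)
          - (1/(2*μ))*(t*(1-t)*‖w-p‖^2) := by rw [h1]; ring
    have h2' : (η/2) * ‖(1-t)•p + t•w‖^2
        = (η/2)*((1-t)*‖p‖^2) + (η/2)*(t*‖w‖^2) - (η/2)*(t*(1-t)*‖w-p‖^2) := by
      rw [h2]; ring
    rw [← mul_le_mul_iff_right₀ ht0]
    nlinarith [hmin, hcvx, h1', h2']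
  have := aux_limit' hc0 (by positivity : (0:ℝ) ≤ ‖w - prox z‖^2)
    (by intro t ht0 ht1; exact key t ht0 ht1)
  linarith

open RealInnerProductSpace in
private lemma mono' {n : ℕ} (η μ : ℝ) (hμ0 : 0 < μ)
    (prox : EuclideanSpace ℝ (Fin n) → EuclideanSpace ℝ (Fin n))
    (ψ : EuclideanSpace ℝ (Fin n) → ℝ)
    (qg : ∀ z w, ψ (prox z) + (1 / (2 * μ)) * ‖prox z - z‖ ^ 2
        + (1/(2*μ) - η/2) * ‖w - prox z‖^2 ≤ ψ w + (1 / (2 * μ)) * ‖w - z‖ ^ 2)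
    (z w : EuclideanSpace ℝ (Fin n)) :
    (1 - η*μ) * ‖prox z - prox w‖^2 ≤ ⟪prox z - prox w, z - w⟫ := by
  have A := qg z (prox w)
  have B := qg w (prox z)
  have hsym : ‖prox w - prox z‖^2 = ‖prox z - prox w‖^2 := by rw [norm_sub_rev]
  have hE : ‖prox w - z‖^2 + ‖prox z - w‖^2 - ‖prox z - z‖^2 - ‖prox w - w‖^2
      = 2*⟪prox z - prox w, z - w⟫ := by
    simp only [← real_inner_self_eq_norm_sq, inner_sub_left, inner_sub_right]
    ring_nf
    nlinarith [real_inner_comm (prox w) z, real_inner_comm (prox z) w,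
      real_inner_comm (prox z) (prox w), real_inner_comm (prox w) w, real_inner_comm (prox z) z,
      real_inner_comm z w]
  have hE' : (1/(2*μ))*(‖prox w - z‖^2 + ‖prox z - w‖^2 - ‖prox z - z‖^2 - ‖prox w - w‖^2)
      = (1/μ)*⟪prox z - prox w, z - w⟫ := by linear_combination (1/(2*μ)) * hE
  rw [hsym] at A
  have hinv : μ * (1/μ) = 1 := by field_simp
  have hsum : (1/μ - η) * ‖prox z - prox w‖^2 ≤ (1/μ) * ⟪prox z - prox w, z - w⟫ := by
    have hrel : (1:ℝ)/(2*μ) = (1/2)*(1/μ) := by ring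
    rw [hrel] at A B hE'
    linarith [A, B, hE']
  have h2 := mul_le_mul_of_nonneg_left hsum hμ0.le
  have e1 : μ * ((1/μ - η) * ‖prox z - prox w‖^2) = (1 - η*μ) * ‖prox z - prox w‖^2 := by
    linear_combination ‖prox z - prox w‖^2 * hinv
  have e2 : μ * ((1/μ) * ⟪prox z - prox w, z - w⟫) = ⟪prox z - prox w, z - w⟫ := by
    linear_combination ⟪prox z - prox w, z - w⟫ * hinv
  rw [e1, e2] at h2
  exact h2

open RealInnerProductSpace in
private lemma key_vec' {E : Type*} [NormedAddCommGroup E] [InnerProductSpace ℝ E]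
    (u q : E) (a : ℝ) (ha0 : 0 < a) (h : a*‖q‖^2 ≤ ⟪q, u⟫) :
    ‖u - q‖ ≤ max 1 ((1-a)/a) * ‖u‖ := by
  set M := max 1 ((1-a)/a) with hM
  have hM1 : 1 ≤ M := le_max_left _ _
  have hM0 : 0 ≤ M := by linarith
  have hqu : ⟪q, u⟫ ≤ ‖q‖*‖u‖ := real_inner_le_norm q u
  have hexp : ‖u-q‖^2 = ‖u‖^2 - 2*⟪q, u⟫ + ‖q‖^2 := by
    rw [norm_sub_sq_real, real_inner_comm q u]
  have hsq : ‖u-q‖^2 ≤ M^2 * ‖u‖^2 := by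
    rcases le_or_gt a (1/2) with hc | hc
    · have hq2 : a*‖q‖ ≤ ‖u‖ := by
        rcases eq_or_lt_of_le (norm_nonneg q) with h0 | h0
        · rw [← h0]; simpa using norm_nonneg u
        · nlinarith
      have hMa : 1 - a ≤ M*a := by
        have := le_max_right 1 ((1-a)/a)
        rw [← hM] at this
        rw [div_le_iff₀ ha0] at this
        linarith
      have hint1 : (a*‖q‖)*(a*‖q‖) ≤ ‖u‖*‖u‖ :=
        mul_self_le_mul_self (by positivity : (0:ℝ) ≤ a*‖q‖) hq2
      have hint2 : (1-a)*(1-a) ≤ (M*a)*(M*a) :=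
        mul_self_le_mul_self (by linarith) hMa
      have hint3 : a^2 * (a*‖q‖^2) ≤ a^2 * ⟪q, u⟫ :=
        mul_le_mul_of_nonneg_left h (sq_nonneg a)
      have hint4 : (1-2*a) * ((a*‖q‖)*(a*‖q‖)) ≤ (1-2*a) * (‖u‖*‖u‖) :=
        mul_le_mul_of_nonneg_left hint1 (by linarith)
      have hexp2 : a^2*‖u-q‖^2 = a^2*‖u‖^2 - 2*(a^2*⟪q, u⟫) + a^2*‖q‖^2 := by
        rw [hexp]; ring
      have key : a^2 * ‖u-q‖^2 ≤ a^2 * (M^2 * ‖u‖^2) := by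
        nlinarith [hexp2, hint2, hint3, hint4, sq_nonneg ‖u‖]
      exact (mul_le_mul_iff_right₀ (by positivity : (0:ℝ) < a^2)).mp key
    · have h1 : ‖u-q‖^2 ≤ ‖u‖^2 := by
        nlinarith [hexp, h, mul_nonneg (by linarith : (0:ℝ) ≤ 2*a - 1) (sq_nonneg ‖q‖)]
      have : 0 ≤ (M^2 - 1) * ‖u‖^2 :=
        mul_nonneg (by nlinarith [hM1]) (sq_nonneg ‖u‖)
      nlinarith [h1, this]
  calc ‖u - q‖ = Real.sqrt (‖u-q‖^2) := (Real.sqrt_sq (norm_nonneg _)).symm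
    _ ≤ Real.sqrt (M^2 * ‖u‖^2) := Real.sqrt_le_sqrt hsq
    _ = M * ‖u‖ := by
        rw [show M^2*‖u‖^2 = (M*‖u‖)^2 from by ring,
          Real.sqrt_sq (mul_nonneg hM0 (norm_nonneg _))]

open RealInnerProductSpace in
private lemma hasGradientAt_of_quadratic_bound' {E : Type*} [NormedAddCommGroup E]
    [InnerProductSpace ℝ E] [CompleteSpace E] (f : E → ℝ) (v x : E) (K : ℝ)
    (h : ∀ y, |f y - f x - ⟪v, y - x⟫| ≤ K * ‖y - x‖^2) : HasGradientAt f v x := by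
  rw [hasGradientAt_iff_isLittleO]
  have hb : (fun y => f y - f x - ⟪v, y - x⟫) =O[nhds x] (fun y => ‖y-x‖^2) :=
    Asymptotics.IsBigO.of_bound K <| Filter.Eventually.of_forall fun y => by
      simpa [Real.norm_eq_abs, abs_of_nonneg (sq_nonneg ‖y - x‖)] using h y
  have hsq : (fun y : E => ‖y-x‖^2) =o[nhds x] (fun y => y - x) := by
    rw [Asymptotics.isLittleO_iff]
    intro c hc
    rw [Metric.eventually_nhds_iff]
    refine ⟨c, hc, fun {y} hy => ?_⟩
    rw [Real.norm_eq_abs, abs_of_nonneg (sq_nonneg _)]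
    have hlt : ‖y - x‖ < c := by rw [← dist_eq_norm]; exact hy
    nlinarith [norm_nonneg (y-x)]
  exact hb.trans_isLittleO hsq

open RealInnerProductSpace in
/-- ∇(μψ) is Lipschitz with constant max{μ⁻¹, η/(1 − ημ)}. -/
theorem stmt3 {n : ℕ} (ψ : EuclideanSpace ℝ (Fin n) → ℝ) (η μ : ℝ)
    (hη : 0 < η) (hμ : μ ∈ Set.Ioo 0 η⁻¹)
    (hcont : Continuous ψ)
    (hwc : ConvexOn ℝ Set.univ (fun z => ψ z + (η / 2) * ‖z‖ ^ 2))
    (prox : EuclideanSpace ℝ (Fin n) → EuclideanSpace ℝ (Fin n))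
    (hprox : ∀ z, IsMinOn (fun w => ψ w + (1 / (2 * μ)) * ‖w - z‖ ^ 2) Set.univ (prox z))
    (env G : _) 
    (henv : ∀ z : EuclideanSpace ℝ (Fin n), env z = ψ (prox z) + (1 / (2 * μ)) * ‖prox z - z‖ ^ 2)
    (hG : ∀ z, HasGradientAt env (G z) z) :
    LipschitzWith (Real.toNNReal (max μ⁻¹ (η / (1 - η * μ)))) G := by
  obtain ⟨hμ0, hμη⟩ := hμ
  have hημ : η * μ < 1 := by
    calc η * μ < η * η⁻¹ := mul_lt_mul_of_pos_left hμη hη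
    _ = 1 := mul_inv_cancel₀ hη.ne'
  have ha0 : 0 < 1 - η * μ := by linarith
  set L : ℝ := max μ⁻¹ (η / (1 - η * μ)) with hL
  have hL0 : 0 ≤ L := le_trans (inv_pos.mpr hμ0).le (le_max_left _ _)
  -- the candidate gradient
  set v : EuclideanSpace ℝ (Fin n) → EuclideanSpace ℝ (Fin n) :=
    fun z => μ⁻¹ • (z - prox z) with hv
  have qg := quad_growth' ψ η μ hμ0 hημ hwc prox hprox
  have hmono := mono' η μ hμ0 prox ψ qg
  -- Lipschitz bound for v
  have lipv : ∀ z w, ‖v z - v w‖ ≤ L * ‖z - w‖ := by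
    intro z w
    have hkv := key_vec' (z - w) (prox z - prox w) (1 - η*μ) ha0 (hmono z w)
    have hvzw : v z - v w = μ⁻¹ • ((z - w) - (prox z - prox w)) := by
      simp only [hv, smul_sub]
      module
    have hnorm : ‖v z - v w‖ = μ⁻¹ * ‖(z - w) - (prox z - prox w)‖ := by
      rw [hvzw, norm_smul, Real.norm_eq_abs, abs_of_pos (inv_pos.mpr hμ0)]
    have hML : μ⁻¹ * max 1 ((1-(1-η*μ))/(1-η*μ)) = L := by
      rw [mul_max_of_nonneg _ _ (inv_pos.mpr hμ0).le, hL, mul_one]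
      congr 1
      rw [show 1 - (1 - η*μ) = η * μ from by ring]
      field_simp
    calc ‖v z - v w‖ = μ⁻¹ * ‖(z - w) - (prox z - prox w)‖ := hnorm
      _ ≤ μ⁻¹ * (max 1 ((1-(1-η*μ))/(1-η*μ)) * ‖z - w‖) :=
          mul_le_mul_of_nonneg_left hkv (inv_pos.mpr hμ0).le
      _ = L * ‖z - w‖ := by rw [← mul_assoc, hML]
  -- upper bound on env differences
  have hup : ∀ z y : EuclideanSpace ℝ (Fin n),
      env y - env z - ⟪v z, y - z⟫ ≤ (1/(2*μ)) * ‖y - z‖^2 := by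
    intro z y
    have h1 : env y ≤ ψ (prox z) + (1/(2*μ)) * ‖prox z - y‖^2 := by
      rw [henv y]; exact hprox y (mem_univ (prox z))
    have h2 : env z = ψ (prox z) + (1/(2*μ)) * ‖prox z - z‖^2 := henv z
    have base : ‖prox z - y‖^2 - ‖prox z - z‖^2 - 2*⟪z - prox z, y - z⟫ = ‖y - z‖^2 := by
      simp only [← real_inner_self_eq_norm_sq, inner_sub_left, inner_sub_right]
      linear_combination real_inner_comm y (prox z) + real_inner_comm (prox z) z
        + real_inner_comm z y
    have hinner : ⟪v z, y - z⟫ = μ⁻¹ * ⟪z - prox z, y - z⟫ := by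
      simp only [hv]; rw [real_inner_smul_left]
    have hident : (1/(2*μ)) * ‖prox z - y‖^2 - (1/(2*μ)) * ‖prox z - z‖^2
        - μ⁻¹ * ⟪z - prox z, y - z⟫ = (1/(2*μ)) * ‖y - z‖^2 := by
      linear_combination (1/(2*μ)) * base
    rw [hinner]
    linarith [h1, hident]
  -- two-sided bound, gradient identification
  have hgrad : ∀ z, HasGradientAt env (v z) z := by
    intro z
    apply hasGradientAt_of_quadratic_bound' env (v z) z (L + 1/(2*μ))
    intro y
    rw [abs_le]
    constructor
    · have hs := hup y z
      have hzy : ⟪v y, z - y⟫ = -⟪v y, y - z⟫ := by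
        rw [show z - y = -(y - z) from by abel, inner_neg_right]
      rw [hzy] at hs
      have hinner : ⟪v y - v z, y - z⟫ = ⟪v y, y - z⟫ - ⟪v z, y - z⟫ := inner_sub_left _ _ _
      have hcs : -(‖v y - v z‖ * ‖y - z‖) ≤ ⟪v y - v z, y - z⟫ := by
        have habs := abs_real_inner_le_norm (v y - v z) (y - z)
        have hneg := neg_abs_le (⟪v y - v z, y - z⟫ : ℝ)
        linarith
      have hlv := lipv y z
      have hnzy : ‖z - y‖ = ‖y - z‖ := norm_sub_rev _ _
      have hmul : ‖v y - v z‖ * ‖y - z‖ ≤ L * ‖y - z‖ * ‖y - z‖ :=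
        mul_le_mul_of_nonneg_right (lipv y z) (norm_nonneg _)
      rw [hnzy] at hs
      nlinarith [hs, hcs, hmul, hinner]
    · have := hup z y
      have hLsq : 0 ≤ L * ‖y - z‖^2 := mul_nonneg hL0 (sq_nonneg _)
      linarith
  -- conclude
  have hGv : ∀ z, G z = v z := fun z => (hG z).unique (hgrad z)
  apply LipschitzWith.of_dist_le_mul
  intro x y
  rw [dist_eq_norm, dist_eq_norm, hGv x, hGv y,
    Real.coe_toNNReal _ hL0]
  exact lipv x y
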